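/- Let 𝒬 be a family of quotient maps of the Riemann sphere. Suppose that for every point w₀ and every disk U containing w₀ there exist a constant δ(w₀) > 0 and a disk V ∋ w₀ with cl(V) ⊂ U such that for all q ∈ 𝒬 the spherical distance dist_s(q⁻¹(∂U), q⁻¹(V)) > δ(w₀). Then 𝒬 is equicontinuous. -/

import Mathlib

noncomputable section

open Set OnePoint Filter

/-- The finite part of a point of the Riemann sphere (junk value `0` at `∞`). -/
def finPart (w : OnePoint ℂ) : ℂ := by
  classical exact if h : ∃ z : ℂ, w = (z : OnePoint ℂ) then h.choose else 0

/-- The chordal (spherical) distance on the Riemann sphere `ℂ̂ = OnePoint ℂ`. -/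
def chordal (w v : OnePoint ℂ) : ℝ := by
  classical exact
    if w = ∞ then (if v = ∞ then 0 else 2 / Real.sqrt (1 + ‖finPart v‖ ^ 2))
    else if v = ∞ then 2 / Real.sqrt (1 + ‖finPart w‖ ^ 2)
    else 2 * ‖finPart w - finPart v‖ /
      (Real.sqrt (1 + ‖finPart w‖ ^ 2) * Real.sqrt (1 + ‖finPart v‖ ^ 2))

/-- Inversion `z ↦ 1/z` on the Riemann sphere, interchanging `0` and `∞`. -/
def opInv (w : OnePoint ℂ) : OnePoint ℂ := by
  classical exact
    if w = ∞ then ((0 : ℂ) : OnePoint ℂ)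
    else if finPart w = 0 then ∞ else (((finPart w)⁻¹ : ℂ) : OnePoint ℂ)


/-- A full continuum on the sphere: a compact connected set with connected complement. -/
def IsFullContinuum (K : Set (OnePoint ℂ)) : Prop :=
  IsCompact K ∧ IsConnected K ∧ IsPreconnected Kᶜ

/-- A quotient map of the sphere: a continuous surjection all of whose fibers are
single points or full continua. -/
def IsSphQuotientMap (q : OnePoint ℂ → OnePoint ℂ) : Prop :=
  Continuous q ∧ Function.Surjective q ∧
    ∀ w, (∃ z, q ⁻¹' {w} = {z}) ∨ IsFullContinuum (q ⁻¹' {w})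

/-- A Jordan curve on the sphere: a homeomorphic image of the circle. -/
def IsJordanCurve (C : Set (OnePoint ℂ)) : Prop :=
  ∃ f : ℂ → OnePoint ℂ, ContinuousOn f (Metric.sphere (0:ℂ) 1) ∧
    Set.InjOn f (Metric.sphere (0:ℂ) 1) ∧ f '' Metric.sphere (0:ℂ) 1 = C

/-- A disk: a Jordan domain on the sphere. -/
def IsDisk (U : Set (OnePoint ℂ)) : Prop :=
  IsOpen U ∧ IsConnected U ∧ IsJordanCurve (frontier U)

/-! ### Basic properties of `chordal` -/

lemma finPart_coe (a : ℂ) : finPart (a : OnePoint ℂ) = a := by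
  unfold finPart
  have h : ∃ z : ℂ, (a : OnePoint ℂ) = (z : OnePoint ℂ) := ⟨a, rfl⟩
  rw [dif_pos h]
  exact (OnePoint.coe_injective h.choose_spec).symm

lemma chordal_coe_coe (a b : ℂ) : chordal (a : OnePoint ℂ) (b : OnePoint ℂ) =
    2 * ‖a - b‖ /
      (Real.sqrt (1 + ‖a‖ ^ 2) * Real.sqrt (1 + ‖b‖ ^ 2)) := by
  unfold chordal
  rw [if_neg (OnePoint.coe_ne_infty a), if_neg (OnePoint.coe_ne_infty b), finPart_coe, finPart_coe]

lemma chordal_coe_infty (a : ℂ) : chordal (a : OnePoint ℂ) ∞ =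
    2 / Real.sqrt (1 + ‖a‖ ^ 2) := by
  unfold chordal
  rw [if_neg (OnePoint.coe_ne_infty a), if_pos rfl, finPart_coe]

lemma chordal_infty_coe (a : ℂ) : chordal ∞ (a : OnePoint ℂ) =
    2 / Real.sqrt (1 + ‖a‖ ^ 2) := by
  unfold chordal
  rw [if_pos rfl, if_neg (OnePoint.coe_ne_infty a), finPart_coe]

lemma chordal_infty_infty : chordal ∞ ∞ = 0 := by
  unfold chordal; rw [if_pos rfl, if_pos rfl]

lemma chordal_comm (z w : OnePoint ℂ) : chordal z w = chordal w z := by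
  unfold chordal
  by_cases hz : z = ∞ <;> by_cases hw : w = ∞ <;>
    simp [hz, hw, abs_sub_comm, mul_comm]
  rw [norm_sub_rev]

lemma one_le_sq (a : ℂ) : 1 ≤ Real.sqrt (1 + ‖a‖ ^ 2) := by
  have h1 : (0:ℝ) ≤ 1 + ‖a‖ ^ 2 := by positivity
  nlinarith [Real.sq_sqrt h1, Real.sqrt_nonneg (1 + ‖a‖ ^ 2), sq_nonneg (‖a‖)]

lemma sq_pos' (a : ℂ) : 0 < Real.sqrt (1 + ‖a‖ ^ 2) := by positivity

lemma chordal_coe_le (a b : ℂ) : chordal (a : OnePoint ℂ) (b : OnePoint ℂ) ≤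
    2 * ‖a - b‖ := by
  rw [chordal_coe_coe]
  have h1 := one_le_sq a
  have h2 := one_le_sq b
  calc 2 * ‖a - b‖ / (Real.sqrt (1 + ‖a‖ ^ 2) * Real.sqrt (1 + ‖b‖ ^ 2))
      ≤ 2 * ‖a - b‖ / 1 := by
        apply div_le_div_of_nonneg_left (by positivity) one_pos
        nlinarith
    _ = 2 * ‖a - b‖ := by ring

/-! ### Auxiliary square-root inequalities -/

lemma le_sqrt_one_add {x : ℝ} (hx : 0 ≤ x) : x ≤ Real.sqrt (1 + x ^ 2) := by
  have h1 : (0:ℝ) ≤ 1 + x ^ 2 := by positivity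
  nlinarith [Real.sq_sqrt h1, Real.sqrt_nonneg (1 + x ^ 2)]

lemma sqrt_one_add_le {x : ℝ} (hx : 0 ≤ x) : Real.sqrt (1 + x ^ 2) ≤ 1 + x := by
  rw [show (1:ℝ) + x = Real.sqrt ((1+x)^2) by rw [Real.sqrt_sq (by linarith)]]
  exact Real.sqrt_le_sqrt (by nlinarith)

lemma sqrt_one_add_mono {x A : ℝ} (hx : 0 ≤ x) (hxA : x ≤ A) :
    Real.sqrt (1 + x ^ 2) ≤ Real.sqrt (1 + A ^ 2) :=
  Real.sqrt_le_sqrt (by nlinarith)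

/-- Lower bound for the chordal distance between a point of modulus `≤ A` and a point of
modulus `≥ 2A+1`. -/
lemma chordal_far_lower {A : ℝ} {a b : ℂ} (ha : ‖a‖ ≤ A)
    (hb : 2 * A + 1 ≤ ‖b‖) :
    1 / Real.sqrt (1 + A ^ 2) ≤ chordal (a : OnePoint ℂ) (b : OnePoint ℂ) := by
  have hx : (0:ℝ) ≤ ‖a‖ := norm_nonneg a
  have hA : (0:ℝ) ≤ A := hx.trans ha
  have hy : (0:ℝ) ≤ ‖b‖ := norm_nonneg b
  rw [chordal_coe_coe]
  have hKA : (0:ℝ) < Real.sqrt (1 + A ^ 2) := by positivity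
  have hSA : (0:ℝ) < Real.sqrt (1 + ‖a‖ ^ 2) := sq_pos' a
  have hSB : (0:ℝ) < Real.sqrt (1 + ‖b‖ ^ 2) := sq_pos' b
  have h1 : Real.sqrt (1 + ‖a‖ ^ 2) ≤ Real.sqrt (1 + A ^ 2) :=
    sqrt_one_add_mono hx ha
  have h2 : Real.sqrt (1 + ‖b‖ ^ 2) ≤ 1 + ‖b‖ := sqrt_one_add_le hy
  have h3 : ‖b‖ - ‖a‖ ≤ ‖a - b‖ := by
    calc ‖b‖ - ‖a‖ ≤ ‖b - a‖ :=
          norm_sub_norm_le b a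
      _ = ‖a - b‖ := by rw [norm_sub_rev]
  rw [div_le_div_iff₀ hKA (by positivity)]
  have h4 : 1 + ‖b‖ ≤ 2 * ‖a - b‖ := by linarith
  have h5 : Real.sqrt (1 + ‖a‖ ^ 2) * Real.sqrt (1 + ‖b‖ ^ 2) ≤
      Real.sqrt (1 + A ^ 2) * (1 + ‖b‖) :=
    mul_le_mul h1 h2 hSB.le hKA.le
  nlinarith [mul_le_mul_of_nonneg_left h4 hKA.le]

/-- Lower bound for the chordal distance in terms of a common bound on the denominators. -/
lemma chordal_near_lower {D : ℝ} {a b : ℂ} (hD : 0 < D)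
    (hA : Real.sqrt (1 + ‖a‖ ^ 2) ≤ D) (hB : Real.sqrt (1 + ‖b‖ ^ 2) ≤ D) :
    2 * ‖a - b‖ / D ^ 2 ≤ chordal (a : OnePoint ℂ) (b : OnePoint ℂ) := by
  rw [chordal_coe_coe]
  have hSA : (0:ℝ) < Real.sqrt (1 + ‖a‖ ^ 2) := sq_pos' a
  have hSB : (0:ℝ) < Real.sqrt (1 + ‖b‖ ^ 2) := sq_pos' b
  have hab : (0:ℝ) ≤ 2 * ‖a - b‖ := by positivity
  apply div_le_div_of_nonneg_left hab (by positivity)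
  calc Real.sqrt (1 + ‖a‖ ^ 2) * Real.sqrt (1 + ‖b‖ ^ 2)
      ≤ D * D := mul_le_mul hA hB hSB.le hD.le
    _ = D ^ 2 := by ring

/-! ### Inversion -/

def gmap (t : ℂ) : OnePoint ℂ := if t = 0 then ∞ else ((t⁻¹ : ℂ) : OnePoint ℂ)

lemma sqrt_inv_aux (b : ℂ) (hb : b ≠ 0) :
    Real.sqrt (1 + ‖b⁻¹‖ ^ 2) = Real.sqrt (1 + ‖b‖ ^ 2) / ‖b‖ := by
  have hb' : (0:ℝ) < ‖b‖ := by
    simpa [norm_pos_iff] using hb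
  rw [norm_inv]
  have h : 1 + (‖b‖)⁻¹ ^ 2 = (1 + ‖b‖ ^ 2) / ‖b‖ ^ 2 := by
    field_simp
    ring
  rw [h, Real.sqrt_div' _ (by positivity), Real.sqrt_sq hb'.le]

lemma chordal_gmap (a b : ℂ) :
    chordal (gmap a) (gmap b) = chordal (a : OnePoint ℂ) (b : OnePoint ℂ) := by
  by_cases ha : a = 0 <;> by_cases hb : b = 0
  · simp [gmap, ha, hb, chordal_infty_infty, chordal_coe_coe]
  · have hb' : (0:ℝ) < ‖b‖ := by simpa [norm_pos_iff] using hb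
    subst ha
    rw [show gmap 0 = ∞ from if_pos rfl, show gmap b = ((b⁻¹:ℂ) : OnePoint ℂ) from if_neg hb,
      chordal_infty_coe, chordal_coe_coe]
    rw [sqrt_inv_aux b hb]
    have h1 : Real.sqrt (1 + ‖(0:ℂ)‖ ^ 2) = 1 := by simp
    rw [h1]
    rw [zero_sub, norm_neg]
    field_simp
  · have ha' : (0:ℝ) < ‖a‖ := by simpa [norm_pos_iff] using ha
    subst hb
    rw [show gmap 0 = ∞ from if_pos rfl, show gmap a = ((a⁻¹:ℂ) : OnePoint ℂ) from if_neg ha,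
      chordal_coe_infty, chordal_coe_coe]
    rw [sqrt_inv_aux a ha]
    have h1 : Real.sqrt (1 + ‖(0:ℂ)‖ ^ 2) = 1 := by simp
    rw [h1]
    rw [sub_zero]
    field_simp
  · have ha' : (0:ℝ) < ‖a‖ := by simpa [norm_pos_iff] using ha
    have hb' : (0:ℝ) < ‖b‖ := by simpa [norm_pos_iff] using hb
    simp only [gmap, if_neg ha, if_neg hb, chordal_coe_coe]
    rw [sqrt_inv_aux a ha, sqrt_inv_aux b hb]
    have habs : ‖a⁻¹ - b⁻¹‖ = ‖a - b‖ / (‖a‖ * ‖b‖) := by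
      have : a⁻¹ - b⁻¹ = (b - a) / (a * b) := by field_simp
      rw [this, norm_div, norm_mul, norm_sub_rev]

    rw [habs]

    have hsa := Real.sqrt_pos.2 (show (0:ℝ) < 1 + ‖a‖ ^ 2 by positivity)
    have hsb := Real.sqrt_pos.2 (show (0:ℝ) < 1 + ‖b‖ ^ 2 by positivity)
    field_simp

lemma continuous_gmap : Continuous gmap := by
  rw [continuous_iff_continuousAt]
  intro t
  by_cases ht : t = 0
  · subst ht
    unfold ContinuousAt
    have hg0 : gmap 0 = ∞ := by simp [gmap]
    rw [hg0]
    rw [OnePoint.hasBasis_nhds_infty.tendsto_right_iff]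
    rintro s ⟨hscl, hscp⟩
    obtain ⟨r, hr0, hsub⟩ : ∃ r : ℝ, 0 < r ∧ s ⊆ Metric.closedBall 0 r := by
      obtain ⟨r, hsub⟩ := hscp.isBounded.subset_closedBall (0:ℂ)
      exact ⟨max r 1, lt_of_lt_of_le one_pos (le_max_right _ _),
        hsub.trans (Metric.closedBall_subset_closedBall (le_max_left _ _))⟩
    filter_upwards [Metric.ball_mem_nhds (0:ℂ) (by positivity : (0:ℝ) < r⁻¹)] with t ht
    by_cases ht0 : t = 0
    · simp [gmap, ht0]
    · rw [show gmap t = ((t⁻¹:ℂ) : OnePoint ℂ) from if_neg ht0]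
      left
      refine ⟨t⁻¹, fun hts => ?_, rfl⟩
      have h1 := hsub hts
      rw [Metric.mem_closedBall, dist_zero_right] at h1
      rw [Metric.mem_ball, dist_zero_right] at ht
      have ht0' : (0:ℝ) < ‖t‖ := by simpa [norm_pos_iff] using ht0
      rw [norm_inv] at h1
      have : r⁻¹ ≤ ‖t‖ := by
        rw [inv_le_comm₀ hr0 ht0']
        exact h1
      exact absurd ht (not_lt.2 this)
  · have : ∀ᶠ u in nhds t, gmap u = ((u⁻¹ : ℂ) : OnePoint ℂ) := by
      filter_upwards [isOpen_compl_singleton.mem_nhds ht] with u hu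
      simp only [gmap, if_neg (show u ≠ 0 from hu)]
    refine ContinuousAt.congr ?_ (Filter.EventuallyEq.symm this)
    exact (OnePoint.continuous_coe.continuousAt).comp (continuousAt_inv₀ ht)

/-! ### Disks -/
open Metric in
section
lemma image_sphere_eq (z₀ : ℂ) {r : ℝ} (hr : 0 < r) :
    (fun u : ℂ => z₀ + (r:ℂ) * u) '' Metric.sphere 0 1 = Metric.sphere z₀ r := by
  ext w
  simp only [mem_image, mem_sphere_iff_norm, sub_zero]
  constructor
  · rintro ⟨u, hu, rfl⟩
    simp only [add_sub_cancel_left]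
    rw [norm_mul, hu, mul_one, Complex.norm_real, Real.norm_eq_abs, abs_of_pos hr]
  · intro hw
    refine ⟨(w - z₀) / r, ?_, ?_⟩
    · rw [norm_div, hw, Complex.norm_real, Real.norm_eq_abs, abs_of_pos hr, div_self hr.ne']
    · have hr' : (r:ℂ) ≠ 0 := by exact_mod_cast hr.ne'
      field_simp
      ring


lemma isJordanCurve_sphere (z₀ : ℂ) {r : ℝ} (hr : 0 < r) :
    IsJordanCurve (((↑) : ℂ → OnePoint ℂ) '' Metric.sphere z₀ r) := by
  refine ⟨fun u => ((z₀ + (r:ℂ) * u : ℂ) : OnePoint ℂ), ?_, ?_, ?_⟩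
  · exact (OnePoint.continuous_coe.comp (by continuity)).continuousOn
  · intro u hu v hv huv
    have := OnePoint.coe_injective huv
    have hr' : (r:ℂ) ≠ 0 := by exact_mod_cast hr.ne'
    exact mul_left_cancel₀ hr' (add_left_cancel this)
  · rw [← image_sphere_eq z₀ hr, image_image]

lemma frontier_coe_ball (z₀ : ℂ) {r : ℝ} (hr : 0 < r) :
    frontier (((↑) : ℂ → OnePoint ℂ) '' Metric.ball z₀ r) =
      ((↑) : ℂ → OnePoint ℂ) '' Metric.sphere z₀ r := by
  have hcl : closure (((↑) : ℂ → OnePoint ℂ) '' Metric.ball z₀ r) =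
      ((↑) : ℂ → OnePoint ℂ) '' Metric.closedBall z₀ r := by
    apply Subset.antisymm
    · exact closure_minimal (image_mono Metric.ball_subset_closedBall)
        ((isClosed_image_coe).2 ⟨Metric.isClosed_closedBall, isCompact_closedBall z₀ r⟩)
    · rw [← closure_ball z₀ hr.ne']
      exact image_closure_subset_closure_image OnePoint.continuous_coe
  rw [frontier, hcl, IsOpen.interior_eq ((isOpen_image_coe).2 Metric.isOpen_ball),
    ← image_diff OnePoint.coe_injective, Metric.closedBall_diff_ball]

lemma isDisk_coe_ball (z₀ : ℂ) {r : ℝ} (hr : 0 < r) :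
    IsDisk (((↑) : ℂ → OnePoint ℂ) '' Metric.ball z₀ r) := by
  refine ⟨(isOpen_image_coe).2 Metric.isOpen_ball, ?_, ?_⟩
  · exact ((convex_ball z₀ r).isPathConnected (Metric.nonempty_ball.2 hr)).isConnected.image
      _ OnePoint.continuous_coe.continuousOn
  · rw [frontier_coe_ball z₀ hr]
    exact isJordanCurve_sphere z₀ hr

-- the shell
lemma isConnected_shell {R : ℝ} (hR : 0 < R) : IsConnected {z : ℂ | R < ‖z‖} := by
  have h1 : IsConnected ((Ioi R : Set ℝ) ×ˢ (Metric.sphere (0:ℂ) 1)) := by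
    refine IsConnected.prod isConnected_Ioi ?_
    refine isConnected_sphere ?_ 0 one_pos.le
    rw [Complex.rank_real_complex]
    exact Cardinal.one_lt_two
  have h2 := h1.image (fun p : ℝ × ℂ => p.1 • p.2)
    (Continuous.continuousOn (continuous_fst.smul continuous_snd))
  convert h2 using 1
  ext z
  simp only [mem_image, mem_setOf_eq, mem_prod, mem_Ioi, mem_sphere_iff_norm, sub_zero]
  constructor
  · intro hz
    have hz0 : z ≠ 0 := by
      intro h0; rw [h0, norm_zero] at hz; exact absurd hz (not_lt.2 hR.le)
    refine ⟨(‖z‖, ‖z‖⁻¹ • z), ⟨hz, ?_⟩, ?_⟩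
    · rw [norm_smul, norm_inv, norm_norm, inv_mul_cancel₀ (norm_ne_zero_iff.2 hz0)]
    · simp only [smul_smul]
      rw [mul_inv_cancel₀ (norm_ne_zero_iff.2 hz0), one_smul]
  · rintro ⟨⟨t, u⟩, ⟨ht, hu⟩, rfl⟩
    simp only [norm_smul, hu, mul_one, Real.norm_eq_abs]
    calc R < t := ht
      _ ≤ |t| := le_abs_self t

lemma Uinf_eq {R : ℝ} (hR : 0 ≤ R) :
    ((((↑) : ℂ → OnePoint ℂ) '' Metric.closedBall 0 R)ᶜ : Set (OnePoint ℂ)) =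
      insert ∞ (((↑) : ℂ → OnePoint ℂ) '' {z : ℂ | R < ‖z‖}) := by
  ext x
  induction x using OnePoint.rec with
  | infty =>
    simp [OnePoint.infty_notMem_image_coe]
  | coe a =>
    simp only [mem_compl_iff, mem_image, mem_insert_iff, mem_setOf_eq]
    constructor
    · intro hx
      right
      refine ⟨a, ?_, rfl⟩
      by_contra hc
      push_neg at hc
      exact hx ⟨a, by simpa [Metric.mem_closedBall, dist_zero_right] using hc, rfl⟩
    · rintro (hc | ⟨b, hb, hba⟩)
      · exact absurd hc (OnePoint.coe_ne_infty a)
      · have hab : b = a := OnePoint.coe_injective hba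
        subst hab
        rintro ⟨c, hc, hca⟩
        have : c = b := OnePoint.coe_injective hca
        subst this
        rw [Metric.mem_closedBall, dist_zero_right] at hc
        exact absurd hb (not_lt.2 hc)

lemma infty_mem_closure_shell {R : ℝ} :
    (∞ : OnePoint ℂ) ∈ closure (((↑) : ℂ → OnePoint ℂ) '' {z : ℂ | R < ‖z‖}) := by
  rw [_root_.mem_closure_iff]
  intro o ho hinf
  obtain ⟨-, hcp⟩ := (OnePoint.isOpen_iff_of_mem hinf).1 ho
  obtain ⟨r, hr⟩ := hcp.isBounded.subset_closedBall (0:ℂ)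
  set t : ℝ := max (max R r) 0 + 1 with ht
  have ht0 : 0 < t := lt_of_le_of_lt (le_max_right _ 0) (lt_add_one _)
  have htR : R < t := lt_of_le_of_lt ((le_max_left R r).trans (le_max_left _ 0)) (lt_add_one _)
  have htr : r < t := lt_of_le_of_lt ((le_max_right R r).trans (le_max_left _ 0)) (lt_add_one _)
  have htnorm : ‖(t : ℂ)‖ = t := by
    rw [Complex.norm_real, Real.norm_eq_abs, abs_of_pos ht0]
  refine ⟨((t:ℂ) : OnePoint ℂ), ?_, ⟨(t:ℂ), by rw [mem_setOf_eq, htnorm]; exact htR, rfl⟩⟩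
  by_contra hmem
  have : (t:ℂ) ∈ Metric.closedBall 0 r := hr hmem
  rw [Metric.mem_closedBall, dist_zero_right, htnorm] at this
  exact absurd this (not_le.2 htr)

lemma isConnected_Uinf {R : ℝ} (hR : 0 < R) :
    IsConnected ((((↑) : ℂ → OnePoint ℂ) '' Metric.closedBall 0 R)ᶜ : Set (OnePoint ℂ)) := by
  rw [Uinf_eq hR.le]
  have hshell := (isConnected_shell hR).image (((↑) : ℂ → OnePoint ℂ))
    OnePoint.continuous_coe.continuousOn
  refine hshell.subset_closure (subset_insert _ _) ?_
  rw [insert_subset_iff]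
  exact ⟨infty_mem_closure_shell, subset_closure⟩

lemma frontier_Uinf {R : ℝ} (hR : 0 < R) :
    frontier ((((↑) : ℂ → OnePoint ℂ) '' Metric.closedBall 0 R)ᶜ : Set (OnePoint ℂ)) =
      ((↑) : ℂ → OnePoint ℂ) '' Metric.sphere 0 R := by
  rw [frontier_compl]
  have hclosed : IsClosed (((↑) : ℂ → OnePoint ℂ) '' Metric.closedBall 0 R) :=
    (isClosed_image_coe).2 ⟨Metric.isClosed_closedBall, isCompact_closedBall 0 R⟩
  have hint : interior (((↑) : ℂ → OnePoint ℂ) '' Metric.closedBall 0 R) =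
      ((↑) : ℂ → OnePoint ℂ) '' Metric.ball 0 R := by
    apply Subset.antisymm
    · intro x hx
      have hx' : x ∈ ((↑) : ℂ → OnePoint ℂ) '' Metric.closedBall 0 R := interior_subset hx
      obtain ⟨a, ha, rfl⟩ := hx'
      have hopen : IsOpen (((↑) : ℂ → OnePoint ℂ) ⁻¹' interior (((↑) : ℂ → OnePoint ℂ) '' Metric.closedBall 0 R)) :=
        isOpen_interior.preimage OnePoint.continuous_coe
      have hsub : ((↑) : ℂ → OnePoint ℂ) ⁻¹' interior (((↑) : ℂ → OnePoint ℂ) '' Metric.closedBall 0 R) ⊆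
          Metric.closedBall 0 R := by
        intro b hb
        have : (b : OnePoint ℂ) ∈ ((↑) : ℂ → OnePoint ℂ) '' Metric.closedBall 0 R := interior_subset hb
        obtain ⟨c, hc, hcb⟩ := this
        rwa [← OnePoint.coe_injective hcb]
      have := interior_maximal hsub hopen
      rw [interior_closedBall 0 hR.ne'] at this
      exact ⟨a, this hx, rfl⟩
    · exact interior_maximal (image_mono Metric.ball_subset_closedBall)
        ((isOpen_image_coe).2 Metric.isOpen_ball)
  rw [frontier, hclosed.closure_eq, hint, ← image_diff OnePoint.coe_injective,
    Metric.closedBall_diff_ball]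

lemma isDisk_Uinf {R : ℝ} (hR : 0 < R) :
    IsDisk ((((↑) : ℂ → OnePoint ℂ) '' Metric.closedBall 0 R)ᶜ : Set (OnePoint ℂ)) := by
  refine ⟨(OnePoint.isOpen_compl_image_coe).2 ⟨Metric.isClosed_closedBall, isCompact_closedBall 0 R⟩,
    isConnected_Uinf hR, ?_⟩
  rw [frontier_Uinf hR]
  exact isJordanCurve_sphere 0 hR

end

/-! ### Small disks around every point -/

lemma exists_small_disk (w₀ : OnePoint ℂ) {ε : ℝ} (hε : 0 < ε) :
    ∃ U : Set (OnePoint ℂ), IsDisk U ∧ w₀ ∈ U ∧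
      ∀ a ∈ U, ∀ b ∈ U, chordal a b < ε := by
  induction w₀ using OnePoint.rec with
  | infty =>
    set R : ℝ := 5 / ε with hR
    have hRpos : 0 < R := by positivity
    refine ⟨((((↑) : ℂ → OnePoint ℂ) '' Metric.closedBall 0 R)ᶜ : Set (OnePoint ℂ)),
      isDisk_Uinf hRpos, mem_compl OnePoint.infty_notMem_image_coe, ?_⟩
    have hmem : ∀ x ∈ ((((↑) : ℂ → OnePoint ℂ) '' Metric.closedBall 0 R)ᶜ : Set (OnePoint ℂ)),
        x = ∞ ∨ ∃ a : ℂ, R < ‖a‖ ∧ x = (a : OnePoint ℂ) := by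
      intro x hx
      rw [Uinf_eq hRpos.le] at hx
      rcases hx with hx | ⟨a, ha, rfl⟩
      · exact Or.inl hx
      · exact Or.inr ⟨a, by simpa using ha, rfl⟩
    intro a ha b hb
    have h4R : 4 / R < ε := by
      have h5 : 4 / R = 4 * ε / 5 := by rw [hR]; field_simp
      rw [h5]; linarith
    have key : ∀ c : ℂ, R < ‖c‖ →
        2 / Real.sqrt (1 + ‖c‖ ^ 2) < 2 / R := by
      intro c hc
      apply div_lt_div_of_pos_left two_pos hRpos
      exact lt_of_lt_of_le hc (le_sqrt_one_add (norm_nonneg c))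
    rcases hmem a ha with rfl | ⟨x, hx, rfl⟩ <;> rcases hmem b hb with rfl | ⟨y, hy, rfl⟩
    · rw [chordal_infty_infty]; exact hε
    · rw [chordal_infty_coe]
      calc 2 / Real.sqrt (1 + ‖y‖ ^ 2) < 2 / R := key y hy
        _ ≤ 4 / R := by gcongr <;> norm_num
        _ < ε := h4R
    · rw [chordal_coe_infty]
      calc 2 / Real.sqrt (1 + ‖x‖ ^ 2) < 2 / R := key x hx
        _ ≤ 4 / R := by gcongr <;> norm_num
        _ < ε := h4R
    · -- both finite, large modulus
      rw [chordal_coe_coe]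
      set SX := Real.sqrt (1 + ‖x‖ ^ 2) with hSX
      set SY := Real.sqrt (1 + ‖y‖ ^ 2) with hSY
      have hSXpos : 0 < SX := sq_pos' x
      have hSYpos : 0 < SY := sq_pos' y
      have hSXR : R < SX := lt_of_lt_of_le hx (le_sqrt_one_add (norm_nonneg x))
      have hSYR : R < SY := lt_of_lt_of_le hy (le_sqrt_one_add (norm_nonneg y))
      have habxy : ‖x - y‖ ≤ SX + SY := by
        calc ‖x - y‖ ≤ ‖x‖ + ‖y‖ := by
              simpa [sub_eq_add_neg] using norm_add_le x (-y)
          _ ≤ SX + SY := by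
              have h1 := le_sqrt_one_add (norm_nonneg x)
              have h2 := le_sqrt_one_add (norm_nonneg y)
              linarith
      rw [div_lt_iff₀ (by positivity)]
      have hεR : ε * R = 5 := by rw [hR]; field_simp
      nlinarith [mul_pos hSXpos hSYpos, mul_lt_mul_of_pos_right hSXR hSYpos,
        mul_lt_mul_of_pos_left hSYR hSXpos]
  | coe a₀ =>
    set r : ℝ := ε / 5 with hr
    have hrpos : 0 < r := by positivity
    refine ⟨((↑) : ℂ → OnePoint ℂ) '' Metric.ball a₀ r, isDisk_coe_ball a₀ hrpos,
      ⟨a₀, Metric.mem_ball_self hrpos, rfl⟩, ?_⟩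
    rintro a ⟨x, hx, rfl⟩ b ⟨y, hy, rfl⟩
    have hxy : ‖x - y‖ < 2 * r := by
      rw [← Complex.dist_eq]
      calc dist x y ≤ dist x a₀ + dist a₀ y := dist_triangle x a₀ y
        _ < r + r := by
            rw [Metric.mem_ball] at hx hy
            rw [dist_comm a₀ y]; exact add_lt_add hx hy
        _ = 2 * r := by ring
    calc chordal (x : OnePoint ℂ) (y : OnePoint ℂ) ≤ 2 * ‖x - y‖ := chordal_coe_le x y
      _ < 2 * (2 * r) := by linarith
      _ = 4 * (ε / 5) := by rw [hr]; ring
      _ < ε := by linarith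

/-! ### A connected set crossing a frontier -/

lemma preconnected_inter_frontier {α : Type*} [TopologicalSpace α] {s U : Set α}
    (hs : IsPreconnected s) (h1 : (s ∩ U).Nonempty) (h2 : (s \ U).Nonempty) :
    (s ∩ frontier U).Nonempty := by
  by_contra hemp
  rw [not_nonempty_iff_eq_empty] at hemp
  have hsub : s ⊆ interior U ∪ (closure U)ᶜ := by
    intro x hx
    by_cases hxc : x ∈ closure U
    · left
      rcases (closure_eq_interior_union_frontier U ▸ hxc) with hxi | hxf
      · exact hxi
      · exact absurd (mem_inter hx hxf) (by rw [hemp]; exact notMem_empty x)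
    · exact Or.inr hxc
  have hne1 : (s ∩ interior U).Nonempty := by
    obtain ⟨x, hxs, hxU⟩ := h1
    refine ⟨x, hxs, ?_⟩
    rcases hsub hxs with hxi | hxc
    · exact hxi
    · exact absurd (subset_closure hxU) hxc
  have hne2 : (s ∩ (closure U)ᶜ).Nonempty := by
    obtain ⟨x, hxs, hxU⟩ := h2
    refine ⟨x, hxs, ?_⟩
    rcases hsub hxs with hxi | hxc
    · exact absurd (interior_subset hxi) hxU
    · exact hxc
  obtain ⟨x, -, hx1, hx2⟩ := hs (interior U) (closure U)ᶜ isOpen_interior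
    isClosed_closure.isOpen_compl hsub hne1 hne2
  exact hx2 (subset_closure (interior_subset hx1))

/-! ### Connectors: small connected sets joining nearby points -/

lemma far_connector {M : ℝ} {δ₀ : ℝ} (hM : 0 < M) (h4M : 4 / M ≤ δ₀)
    {aa bb : ℂ} (haa : ‖aa‖ ≤ 1 / M) (hbb : ‖bb‖ ≤ 1 / M) :
    ∃ s : Set (OnePoint ℂ), IsPreconnected s ∧ gmap aa ∈ s ∧ gmap bb ∈ s ∧
      ∀ x ∈ s, chordal x (gmap aa) ≤ δ₀ := by
  refine ⟨gmap '' segment ℝ aa bb,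
    ((convex_segment aa bb).isPreconnected).image _ continuous_gmap.continuousOn,
    ⟨aa, left_mem_segment ℝ aa bb, rfl⟩, ⟨bb, right_mem_segment ℝ aa bb, rfl⟩, ?_⟩
  rintro x ⟨t, ht, rfl⟩
  have htball : t ∈ Metric.closedBall (0:ℂ) (1/M) := by
    refine (convex_closedBall (0:ℂ) (1/M)).segment_subset ?_ ?_ ht
    · rw [Metric.mem_closedBall, dist_zero_right]; exact haa
    · rw [Metric.mem_closedBall, dist_zero_right]; exact hbb
  rw [Metric.mem_closedBall, dist_zero_right] at htball
  rw [chordal_gmap]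
  calc chordal (t : OnePoint ℂ) (aa : OnePoint ℂ) ≤ 2 * ‖t - aa‖ :=
        chordal_coe_le t aa
    _ ≤ 2 * (‖t‖ + ‖aa‖) := by
        have := norm_add_le t (-aa)
        simp only [norm_neg] at this
        have h' : ‖t - aa‖ ≤ ‖t‖ + ‖aa‖ := by
          simpa [sub_eq_add_neg] using this
        linarith
    _ ≤ 2 * (1/M + 1/M) := by linarith
    _ = 4 / M := by ring
    _ ≤ δ₀ := h4M

lemma exists_connector {δ₀ : ℝ} (hδ₀ : 0 < δ₀) :
    ∃ δ : ℝ, 0 < δ ∧ ∀ z w : OnePoint ℂ, chordal z w < δ →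
      ∃ s : Set (OnePoint ℂ), IsPreconnected s ∧ z ∈ s ∧ w ∈ s ∧
        ∀ x ∈ s, chordal x z ≤ δ₀ := by
  set M : ℝ := 4 / δ₀ + 1 with hMdef
  have hMpos : 0 < M := by positivity
  have h4M : 4 / M ≤ δ₀ := by
    rw [div_le_iff₀ hMpos, hMdef]
    have : δ₀ * (4 / δ₀) = 4 := by field_simp
    nlinarith
  set c₀ : ℝ := 1 / Real.sqrt (1 + M ^ 2) with hc₀
  set c₁ : ℝ := 1 / Real.sqrt (1 + (2*M+1) ^ 2) with hc₁
  set D : ℝ := Real.sqrt (1 + (4*M+3) ^ 2) with hD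
  have hDpos : 0 < D := by rw [hD]; positivity
  have hc₀pos : 0 < c₀ := by rw [hc₀]; positivity
  have hc₁pos : 0 < c₁ := by rw [hc₁]; positivity
  refine ⟨min c₀ (min c₁ (δ₀ / D ^ 2)), by positivity, ?_⟩
  intro z w hzw
  have hδc₀ : chordal z w < c₀ := lt_of_lt_of_le hzw (min_le_left _ _)
  have hδc₁ : chordal z w < c₁ := lt_of_lt_of_le hzw ((min_le_right _ _).trans (min_le_left _ _))
  have hδD : chordal z w < δ₀ / D ^ 2 :=
    lt_of_lt_of_le hzw ((min_le_right _ _).trans (min_le_right _ _))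
  -- a helper to express sqrt monotonicity bounds
  induction z using OnePoint.rec with
  | infty =>
    -- `w` must be `∞` or of modulus `> M`
    have hbb : ∃ bb : ℂ, ‖bb‖ ≤ 1 / M ∧ gmap bb = w := by
      induction w using OnePoint.rec with
      | infty => exact ⟨0, by rw [norm_zero]; positivity, if_pos rfl⟩
      | coe b =>
        have hbM : M < ‖b‖ := by
          by_contra hble
          push_neg at hble
          have h1 : Real.sqrt (1 + ‖b‖ ^ 2) ≤ Real.sqrt (1 + M ^ 2) :=
            sqrt_one_add_mono (norm_nonneg b) hble
          have hpos : (0:ℝ) < Real.sqrt (1 + ‖b‖ ^ 2) := sq_pos' b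
          have h2 : c₀ ≤ 2 / Real.sqrt (1 + ‖b‖ ^ 2) := by
            rw [hc₀]
            have t1 : 1 / Real.sqrt (1 + M ^ 2) ≤ 1 / Real.sqrt (1 + ‖b‖ ^ 2) :=
              one_div_le_one_div_of_le hpos h1
            have t2 : 1 / Real.sqrt (1 + ‖b‖ ^ 2) ≤
                2 / Real.sqrt (1 + ‖b‖ ^ 2) := by
              rw [div_le_div_iff₀ hpos hpos]
              nlinarith
            linarith
          rw [chordal_infty_coe] at hδc₀
          linarith
        have hb0 : b ≠ 0 := by
          intro h0; rw [h0] at hbM; simp at hbM; linarith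
        refine ⟨b⁻¹, ?_, ?_⟩
        · rw [norm_inv, one_div]
          exact inv_anti₀ hMpos hbM.le
        · rw [gmap, if_neg (inv_ne_zero hb0), inv_inv]
    obtain ⟨bb, hbb1, hbb2⟩ := hbb
    obtain ⟨s, hs1, hs2, hs3, hs4⟩ := far_connector hMpos h4M
      (show ‖(0:ℂ)‖ ≤ 1/M by simp; positivity) hbb1
    rw [show gmap 0 = ∞ from if_pos rfl] at hs2 hs4
    exact ⟨s, hs1, hs2, hbb2 ▸ hs3, hs4⟩
  | coe a =>
    by_cases h2M : 2 * M + 1 < ‖a‖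
    · -- `z` is far out; so is `w`, and we connect through `∞` via `gmap`
      have ha0 : a ≠ 0 := by
        intro h0; rw [h0, norm_zero] at h2M; linarith
      have hbb : ∃ bb : ℂ, ‖bb‖ ≤ 1 / M ∧ gmap bb = w := by
        induction w using OnePoint.rec with
        | infty => exact ⟨0, by rw [norm_zero]; positivity, if_pos rfl⟩
        | coe b =>
          have hbM : M < ‖b‖ := by
            by_contra hble
            push_neg at hble
            have hlow := chordal_far_lower hble h2M.le
            rw [chordal_comm] at hlow
            rw [← hc₀] at hlow
            linarith
          have hb0 : b ≠ 0 := by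
            intro h0; rw [h0, norm_zero] at hbM; linarith
          refine ⟨b⁻¹, ?_, ?_⟩
          · rw [norm_inv, one_div]
            exact inv_anti₀ hMpos hbM.le
          · rw [gmap, if_neg (inv_ne_zero hb0), inv_inv]
      obtain ⟨bb, hbb1, hbb2⟩ := hbb
      have haa1 : ‖a⁻¹‖ ≤ 1 / M := by
        rw [norm_inv, one_div]
        exact inv_anti₀ hMpos (by linarith)
      obtain ⟨s, hs1, hs2, hs3, hs4⟩ := far_connector hMpos h4M haa1 hbb1
      have hga : gmap a⁻¹ = (a : OnePoint ℂ) := by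
        rw [gmap, if_neg (inv_ne_zero ha0), inv_inv]
      rw [hga] at hs2 hs4
      exact ⟨s, hs1, hs2, hbb2 ▸ hs3, hs4⟩
    · -- `z` is in a bounded region
      push_neg at h2M
      induction w using OnePoint.rec with
      | infty =>
        exfalso
        rw [chordal_coe_infty] at hδc₁
        have hpos : (0:ℝ) < Real.sqrt (1 + ‖a‖ ^ 2) := sq_pos' a
        have h1 : Real.sqrt (1 + ‖a‖ ^ 2) ≤ Real.sqrt (1 + (2*M+1) ^ 2) :=
          sqrt_one_add_mono (norm_nonneg a) h2M
        have t1 : 1 / Real.sqrt (1 + (2*M+1) ^ 2) ≤ 1 / Real.sqrt (1 + ‖a‖ ^ 2) :=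
          one_div_le_one_div_of_le hpos h1
        have t2 : 1 / Real.sqrt (1 + ‖a‖ ^ 2) ≤
            2 / Real.sqrt (1 + ‖a‖ ^ 2) := by
          rw [div_le_div_iff₀ hpos hpos]; nlinarith
        rw [hc₁] at hδc₁
        linarith
      | coe b =>
        have hb43 : ‖b‖ ≤ 4 * M + 3 := by
          by_contra hbig
          push_neg at hbig
          have hge : 2 * (2*M+1) + 1 ≤ ‖b‖ := by linarith
          have hlow := chordal_far_lower h2M hge
          rw [← hc₁] at hlow
          linarith
        have hSA : Real.sqrt (1 + ‖a‖ ^ 2) ≤ D :=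
          sqrt_one_add_mono (norm_nonneg a) (by linarith)
        have hSB : Real.sqrt (1 + ‖b‖ ^ 2) ≤ D :=
          sqrt_one_add_mono (norm_nonneg b) hb43
        have hlow := chordal_near_lower hDpos hSA hSB
        have hD2 : (0:ℝ) < D ^ 2 := by positivity
        have h2ab : 2 * ‖a - b‖ < δ₀ := by
          calc 2 * ‖a - b‖ = 2 * ‖a - b‖ / D ^ 2 * D ^ 2 := by
                field_simp
            _ < δ₀ / D ^ 2 * D ^ 2 :=
                mul_lt_mul_of_pos_right (lt_of_le_of_lt hlow hδD) hD2
            _ = δ₀ := by field_simp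
        refine ⟨((↑) : ℂ → OnePoint ℂ) '' segment ℝ a b,
          ((convex_segment a b).isPreconnected).image _ OnePoint.continuous_coe.continuousOn,
          ⟨a, left_mem_segment ℝ a b, rfl⟩, ⟨b, right_mem_segment ℝ a b, rfl⟩, ?_⟩
        rintro x ⟨t, ht, rfl⟩
        have htb : t ∈ Metric.closedBall a (dist a b) := by
          refine (convex_closedBall a (dist a b)).segment_subset ?_ ?_ ht
          · exact Metric.mem_closedBall_self dist_nonneg
          · rw [Metric.mem_closedBall, dist_comm]
        rw [Metric.mem_closedBall] at htb
        calc chordal (t : OnePoint ℂ) (a : OnePoint ℂ) ≤ 2 * ‖t - a‖ :=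
              chordal_coe_le t a
          _ = 2 * dist t a := by rw [Complex.dist_eq]
          _ ≤ 2 * dist a b := by linarith
          _ = 2 * ‖a - b‖ := by rw [Complex.dist_eq]
          _ ≤ δ₀ := h2ab.le

/-- A family `𝒬` of quotient maps of the sphere is equicontinuous
provided that for every `w₀` and every disk `U ∋ w₀` there are `δ(w₀) > 0` and a disk
`V ∋ w₀` with `cl V ⊆ U` such that `dist_s(q⁻¹(∂U), q⁻¹(V)) > δ(w₀)` for all `q ∈ 𝒬`. -/
theorem quotient_family_equicontinuous
    (𝒬 : Set (OnePoint ℂ → OnePoint ℂ))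
    (hq : ∀ q ∈ 𝒬, IsSphQuotientMap q)
    (h : ∀ w₀ : OnePoint ℂ, ∀ U : Set (OnePoint ℂ), IsDisk U → w₀ ∈ U →
      ∃ δ > (0:ℝ), ∃ V : Set (OnePoint ℂ), IsDisk V ∧ w₀ ∈ V ∧ closure V ⊆ U ∧
        ∀ q ∈ 𝒬, ∀ x ∈ q ⁻¹' (frontier U), ∀ y ∈ q ⁻¹' V, chordal x y > δ) :
    ∀ ε > (0:ℝ), ∃ δ > (0:ℝ), ∀ q ∈ 𝒬, ∀ z w : OnePoint ℂ,
      chordal z w < δ → chordal (q z) (q w) < ε := by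
  intro ε hε
  -- choose a small disk around every point
  have hU := fun w₀ : OnePoint ℂ => exists_small_disk w₀ hε
  choose U hUdisk hUmem hUsmall using hU
  -- apply the hypothesis at every point
  have hh := fun w₀ : OnePoint ℂ => h w₀ (U w₀) (hUdisk w₀) (hUmem w₀)
  choose δf hδf V hVdisk hVmem hVcl hVsep using hh
  -- extract a finite subcover of the `V`'s
  have hcover : (univ : Set (OnePoint ℂ)) ⊆ ⋃ w₀, V w₀ :=
    fun x _ => mem_iUnion.2 ⟨x, hVmem x⟩
  obtain ⟨t, ht⟩ := isCompact_univ.elim_finite_subcover V (fun w₀ => (hVdisk w₀).1) hcover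
  have htne : t.Nonempty := by
    by_contra hte
    rw [Finset.not_nonempty_iff_eq_empty] at hte
    have := ht (mem_univ (∞ : OnePoint ℂ))
    simp [hte] at this
  set δ₀ : ℝ := t.inf' htne δf with hδ₀def
  have hδ₀pos : 0 < δ₀ := by
    rw [hδ₀def, Finset.lt_inf'_iff]
    exact fun i _ => hδf i
  obtain ⟨δ, hδpos, hconn⟩ := exists_connector hδ₀pos
  refine ⟨δ, hδpos, ?_⟩
  intro q hqQ z w hzw
  have hqz := ht (mem_univ (q z))
  rw [mem_iUnion₂] at hqz
  obtain ⟨i, hit, hqzV⟩ := hqz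
  have hqzU : q z ∈ U i := hVcl i (subset_closure hqzV)
  by_cases hqw : q w ∈ U i
  · exact hUsmall i (q z) hqzU (q w) hqw
  · exfalso
    obtain ⟨s, hs, hzs, hws, hsball⟩ := hconn z w hzw
    have himg : IsPreconnected (q '' s) := hs.image q (hq q hqQ).1.continuousOn
    have hfr : ((q '' s) ∩ frontier (U i)).Nonempty := by
      apply preconnected_inter_frontier himg
      · exact ⟨q z, mem_image_of_mem q hzs, hqzU⟩
      · exact ⟨q w, mem_image_of_mem q hws, hqw⟩
    obtain ⟨y, ⟨x, hxs, rfl⟩, hyfr⟩ := hfr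
    have hsep := hVsep i q hqQ x hyfr z hqzV
    have hle : chordal x z ≤ δ₀ := hsball x hxs
    have hge : δ₀ ≤ δf i := Finset.inf'_le δf hit
    linarith
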